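/- Suppose K : (0,1] → (0,∞) is increasing and satisfies the doubling property K(2t) ≤ C K(t) for t ∈ (0,1/2]. Then for any fixed z ∈ D, the integral of K(1−|σ_a(w)|²)/((1−|w|²)^s |1−w̄z|^r) over the pseudo-hyperbolic disk E(z,1/2) is bounded below by a constant (depending only on C, s, r) times K(1−|σ_a(z)|²)/(1−|z|²)^{s+r−2}, uniformly in a ∈ D. -/

import Mathlib

set_option maxHeartbeats 1000000
open MeasureTheory Complex

lemma normSq_id (a w : ℂ) :
    Complex.normSq (1 - (starRingEnd ℂ) a * w) - Complex.normSq (a - w)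
      = (1 - Complex.normSq a) * (1 - Complex.normSq w) := by
  simp only [Complex.normSq_apply, Complex.sub_re, Complex.sub_im, Complex.mul_re, Complex.mul_im,
    Complex.one_re, Complex.one_im, Complex.conj_re, Complex.conj_im]
  ring

lemma den_ne (a w : ℂ) (ha : ‖a‖ < 1) (hw : ‖w‖ < 1) : (1 : ℂ) - (starRingEnd ℂ) a * w ≠ 0 := by
  intro h
  have h1 : ‖(starRingEnd ℂ) a * w‖ < 1 := by
    rw [norm_mul, RCLike.norm_conj]
    nlinarith [norm_nonneg a, norm_nonneg w]
  have : (1 : ℂ) = (starRingEnd ℂ) a * w := by linear_combination h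
  rw [← this] at h1
  simp at h1

lemma den_pos (a w : ℂ) (ha : ‖a‖ < 1) (hw : ‖w‖ < 1) :
    0 < ‖(1 : ℂ) - (starRingEnd ℂ) a * w‖ :=
  norm_pos_iff.mpr (den_ne a w ha hw)

lemma one_sub_sq (a w : ℂ) (ha : ‖a‖ < 1) (hw : ‖w‖ < 1) :
    1 - ‖(a - w) / (1 - (starRingEnd ℂ) a * w)‖ ^ 2
      = (1 - ‖a‖ ^ 2) * (1 - ‖w‖ ^ 2) / ‖1 - (starRingEnd ℂ) a * w‖ ^ 2 := by
  have hd := den_ne a w ha hw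
  have hd' : ‖(1 : ℂ) - (starRingEnd ℂ) a * w‖ ≠ 0 := norm_ne_zero_iff.mpr hd
  have e : ∀ x : ℂ, ‖x‖ ^ 2 = Complex.normSq x := fun x => by
    rw [Complex.sq_norm]
  rw [norm_div, div_pow, eq_div_iff (by positivity)]
  rw [sub_mul, div_mul_cancel₀ _ (by positivity)]
  simp only [e, one_mul]
  have := normSq_id a w
  linarith [this]

lemma one_sub_sq_pos (a w : ℂ) (ha : ‖a‖ < 1) (hw : ‖w‖ < 1) :
    0 < 1 - ‖(a - w) / (1 - (starRingEnd ℂ) a * w)‖ ^ 2 := by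
  rw [one_sub_sq a w ha hw]
  have h1 : (0:ℝ) < 1 - ‖a‖ ^ 2 := by nlinarith [norm_nonneg a]
  have h2 : (0:ℝ) < 1 - ‖w‖ ^ 2 := by nlinarith [norm_nonneg w]
  have h3 := den_pos a w ha hw
  exact div_pos (mul_pos h1 h2) (pow_pos h3 2)

lemma conj_den_norm (w z : ℂ) :
    ‖(1 : ℂ) - (starRingEnd ℂ) w * z‖ = ‖(1 : ℂ) - (starRingEnd ℂ) z * w‖ := by
  rw [← RCLike.norm_conj ((1 : ℂ) - (starRingEnd ℂ) z * w)]
  congr 1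
  simp only [map_sub, map_one, map_mul, RingHomCompTriple.comp_apply, RingHom.id_apply,
    Complex.conj_conj]
  ring

lemma keyfacts (a z w : ℂ) (ha : ‖a‖ < 1) (hz : ‖z‖ < 1) (hw1 : ‖w‖ < 1)
    (hw2 : ‖(z - w) / (1 - (starRingEnd ℂ) z * w)‖ < 1 / 2) :
    (3/16) * (1 - ‖z‖ ^ 2) ≤ 1 - ‖w‖ ^ 2 ∧ 1 - ‖w‖ ^ 2 ≤ 4 * (1 - ‖z‖ ^ 2) ∧
    (1/2) * (1 - ‖z‖ ^ 2) ≤ ‖1 - (starRingEnd ℂ) w * z‖ ∧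
    ‖1 - (starRingEnd ℂ) w * z‖ ≤ 2 * (1 - ‖z‖ ^ 2) ∧
    (1 - ‖(a - z) / (1 - (starRingEnd ℂ) a * z)‖ ^ 2) / 48
      ≤ 1 - ‖(a - w) / (1 - (starRingEnd ℂ) a * w)‖ ^ 2 := by
  have hY : (0:ℝ) < 1 - ‖z‖ ^ 2 := by nlinarith [norm_nonneg z]
  have hA : (0:ℝ) < 1 - ‖a‖ ^ 2 := by nlinarith [norm_nonneg a]
  have hdzw : 0 < ‖(1 : ℂ) - (starRingEnd ℂ) z * w‖ := den_pos z w hz hw1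
  have hdaz : 0 < ‖(1 : ℂ) - (starRingEnd ℂ) a * z‖ := den_pos a z ha hz
  have hdaw : 0 < ‖(1 : ℂ) - (starRingEnd ℂ) a * w‖ := den_pos a w ha hw1
  -- ‖z - w‖ ≤ dzw / 2
  have hzw_half : ‖z - w‖ ≤ ‖(1 : ℂ) - (starRingEnd ℂ) z * w‖ / 2 := by
    rw [norm_div, div_lt_iff₀ hdzw] at hw2
    linarith
  -- dzw lower bound
  have hdzw_lb : (1 - ‖z‖ ^ 2) / 2 ≤ ‖(1 : ℂ) - (starRingEnd ℂ) z * w‖ := by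
    have h1 : ‖(1:ℂ)‖ - ‖(starRingEnd ℂ) z * w‖ ≤ ‖(1 : ℂ) - (starRingEnd ℂ) z * w‖ :=
      norm_sub_norm_le _ _
    rw [norm_one, norm_mul, RCLike.norm_conj] at h1
    nlinarith [norm_nonneg z, norm_nonneg w]
  -- dzw upper bound
  have hone_zz : ‖(1:ℂ) - (starRingEnd ℂ) z * z‖ = 1 - ‖z‖ ^ 2 := by
    have e1 : (starRingEnd ℂ) z * z = (Complex.normSq z : ℂ) := by rw [mul_comm, Complex.mul_conj]
    have e2 : Complex.normSq z = ‖z‖ ^ 2 := by rw [← Complex.sq_norm]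
    have e3 : ((1:ℂ) - ((‖z‖ ^ 2 : ℝ) : ℂ)) = (((1 - ‖z‖ ^ 2 : ℝ)) : ℂ) := by push_cast; ring
    rw [e1, e2, e3, Complex.norm_real, Real.norm_eq_abs, _root_.abs_of_nonneg hY.le]
  have hdzw_ub : ‖(1 : ℂ) - (starRingEnd ℂ) z * w‖ ≤ 2 * (1 - ‖z‖ ^ 2) := by
    have e : (1 : ℂ) - (starRingEnd ℂ) z * w
        = (1 - (starRingEnd ℂ) z * z) + (starRingEnd ℂ) z * (z - w) := by ring
    have h1 : ‖(1 : ℂ) - (starRingEnd ℂ) z * w‖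
        ≤ ‖(1:ℂ) - (starRingEnd ℂ) z * z‖ + ‖(starRingEnd ℂ) z * (z - w)‖ := by
      rw [e]; exact norm_add_le _ _
    have h3 : ‖(starRingEnd ℂ) z * (z - w)‖ ≤ ‖z - w‖ := by
      rw [norm_mul, RCLike.norm_conj]
      nlinarith [norm_nonneg (z - w), norm_nonneg z]
    rw [hone_zz] at h1
    linarith
  -- identity at (z, w)
  have hid_zw := one_sub_sq z w hz hw1
  have hq34 : (3/4 : ℝ) * ‖(1 : ℂ) - (starRingEnd ℂ) z * w‖ ^ 2
      ≤ (1 - ‖z‖ ^ 2) * (1 - ‖w‖ ^ 2) := by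
    have h34 : (3/4 : ℝ) ≤ (1 - ‖z‖ ^ 2) * (1 - ‖w‖ ^ 2) / ‖(1 : ℂ) - (starRingEnd ℂ) z * w‖ ^ 2 := by
      rw [← hid_zw]
      nlinarith [norm_nonneg ((z - w) / (1 - (starRingEnd ℂ) z * w))]
    have := (le_div_iff₀ (pow_pos hdzw 2)).mp h34
    linarith
  have hq1 : (1 - ‖z‖ ^ 2) * (1 - ‖w‖ ^ 2) ≤ ‖(1 : ℂ) - (starRingEnd ℂ) z * w‖ ^ 2 := by
    have h1 : (1 - ‖z‖ ^ 2) * (1 - ‖w‖ ^ 2) / ‖(1 : ℂ) - (starRingEnd ℂ) z * w‖ ^ 2 ≤ 1 := by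
      rw [← hid_zw]
      nlinarith [sq_nonneg ‖(z - w) / (1 - (starRingEnd ℂ) z * w)‖]
    have := (div_le_one (pow_pos hdzw 2)).mp h1
    linarith
  have hw_lb : (3/16) * (1 - ‖z‖ ^ 2) ≤ 1 - ‖w‖ ^ 2 := by
    nlinarith [mul_le_mul hdzw_lb hdzw_lb (by linarith) hdzw.le, hY]
  have hw_ub : 1 - ‖w‖ ^ 2 ≤ 4 * (1 - ‖z‖ ^ 2) := by
    nlinarith [mul_le_mul hdzw_ub hdzw_ub hdzw.le (by linarith), hY]
  -- daw ≤ 3 daz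
  have hdaz_lb : (1 - ‖z‖ ^ 2) / 2 ≤ ‖(1 : ℂ) - (starRingEnd ℂ) a * z‖ := by
    have h1 : ‖(1:ℂ)‖ - ‖(starRingEnd ℂ) a * z‖ ≤ ‖(1 : ℂ) - (starRingEnd ℂ) a * z‖ :=
      norm_sub_norm_le _ _
    rw [norm_one, norm_mul, RCLike.norm_conj] at h1
    nlinarith [norm_nonneg a, norm_nonneg z]
  have hdaw_ub : ‖(1 : ℂ) - (starRingEnd ℂ) a * w‖ ≤ 3 * ‖(1 : ℂ) - (starRingEnd ℂ) a * z‖ := by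
    have e : (1 : ℂ) - (starRingEnd ℂ) a * w
        = (1 - (starRingEnd ℂ) a * z) + (starRingEnd ℂ) a * (z - w) := by ring
    have h1 : ‖(1 : ℂ) - (starRingEnd ℂ) a * w‖
        ≤ ‖(1:ℂ) - (starRingEnd ℂ) a * z‖ + ‖(starRingEnd ℂ) a * (z - w)‖ := by
      rw [e]; exact norm_add_le _ _
    have h2 : ‖(starRingEnd ℂ) a * (z - w)‖ ≤ ‖z - w‖ := by
      rw [norm_mul, RCLike.norm_conj]
      nlinarith [norm_nonneg (z - w), norm_nonneg a]
    linarith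
  -- numerator bound
  have hid_aw := one_sub_sq a w ha hw1
  have hid_az := one_sub_sq a z ha hz
  have hnum : (1 - ‖(a - z) / (1 - (starRingEnd ℂ) a * z)‖ ^ 2) / 48
      ≤ 1 - ‖(a - w) / (1 - (starRingEnd ℂ) a * w)‖ ^ 2 := by
    rw [hid_aw, hid_az]
    rw [div_div, div_le_div_iff₀ (mul_pos (pow_pos hdaz 2) (by norm_num)) (pow_pos hdaw 2)]
    have hdawsq : ‖(1 : ℂ) - (starRingEnd ℂ) a * w‖ ^ 2
        ≤ 9 * ‖(1 : ℂ) - (starRingEnd ℂ) a * z‖ ^ 2 := by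
      nlinarith [mul_le_mul hdaw_ub hdaw_ub hdaw.le (by linarith : (0:ℝ) ≤ 3 * ‖(1 : ℂ) - (starRingEnd ℂ) a * z‖)]
    nlinarith [mul_le_mul_of_nonneg_left hdawsq (mul_nonneg hA.le hY.le),
      mul_le_mul_of_nonneg_left hw_lb
        (mul_nonneg hA.le (mul_nonneg (sq_nonneg ‖(1 : ℂ) - (starRingEnd ℂ) a * z‖) (by norm_num : (0:ℝ) ≤ 48)))]
  refine ⟨hw_lb, hw_ub, ?_, ?_, hnum⟩
  · rw [conj_den_norm]; linarith
  · rw [conj_den_norm]; linarith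

lemma rpow_ub {x y α β : ℝ} (s : ℝ) (hy : 0 < y) (hα : 0 < α) (h1 : α * y ≤ x) (h2 : x ≤ β * y) :
    x ^ s ≤ max (α ^ s) (β ^ s) * y ^ s := by
  have hx : 0 < x := lt_of_lt_of_le (by positivity) h1
  have hβ : 0 < β := by nlinarith
  have hys := Real.rpow_nonneg hy.le s
  rcases le_or_gt 0 s with hs | hs
  · refine le_trans (le_trans (Real.rpow_le_rpow hx.le h2 hs)
      (le_of_eq (Real.mul_rpow hβ.le hy.le))) ?_
    nlinarith [le_max_right (α ^ s) (β ^ s)]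
  · refine le_trans (le_trans (Real.rpow_le_rpow_of_nonpos (by positivity) h1 hs.le)
      (le_of_eq (Real.mul_rpow hα.le hy.le))) ?_
    nlinarith [le_max_left (α ^ s) (β ^ s)]

lemma rpow_lb {x y α β : ℝ} (s : ℝ) (hy : 0 < y) (hα : 0 < α) (h1 : α * y ≤ x) (h2 : x ≤ β * y) :
    min (α ^ s) (β ^ s) * y ^ s ≤ x ^ s := by
  have hx : 0 < x := lt_of_lt_of_le (by positivity) h1
  have hβ : 0 < β := by nlinarith
  have hys := Real.rpow_nonneg hy.le s
  rcases le_or_gt 0 s with hs | hs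
  · refine le_trans ?_ (le_trans (le_of_eq (Real.mul_rpow hα.le hy.le).symm)
      (Real.rpow_le_rpow (by positivity) h1 hs))
    nlinarith [min_le_left (α ^ s) (β ^ s)]
  · refine le_trans ?_ (le_trans (le_of_eq (Real.mul_rpow hβ.le hy.le).symm)
      (Real.rpow_le_rpow_of_nonpos hx h2 hs.le))
    nlinarith [min_le_right (α ^ s) (β ^ s)]

/-- Lower bound half of Lemma 2.2: if `K` is increasing, positive on `(0,∞)`, and doubling,
then the integral of `K(1−|σ_a(w)|²)/((1−|w|²)^s |1−w̄z|^r)` over the pseudo-hyperbolic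
disk `E(z,1/2)` is bounded below by a constant times `K(1−|σ_a(z)|²)/(1−|z|²)^{s+r−2}`,
uniformly in `a, z` in the unit disk. -/
theorem stmt_15 (K : ℝ → ℝ) (hmono : Monotone K) (hpos : ∀ t > 0, 0 < K t)
    (C : ℝ) (hdouble : ∀ t ∈ Set.Ioc (0 : ℝ) (1 / 2), K (2 * t) ≤ C * K t) (s r : ℝ) :
    ∃ c > (0 : ℝ), ∀ a z : ℂ, ‖a‖ < 1 → ‖z‖ < 1 →
      c * K (1 - ‖(a - z) / (1 - (starRingEnd ℂ) a * z)‖ ^ 2) / (1 - ‖z‖ ^ 2) ^ (s + r - 2) ≤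
        ∫ w in {w : ℂ | ‖w‖ < 1 ∧ ‖(z - w) / (1 - (starRingEnd ℂ) z * w)‖ < 1 / 2},
          K (1 - ‖(a - w) / (1 - (starRingEnd ℂ) a * w)‖ ^ 2) /
            ((1 - ‖w‖ ^ 2) ^ s * ‖1 - (starRingEnd ℂ) w * z‖ ^ r) := by
  have hC : 0 < C := by
    have h := hdouble (1/4) ⟨by norm_num, by norm_num⟩
    have h1 : (0:ℝ) < K (2 * (1/4)) := hpos _ (by norm_num)
    have h2 : (0:ℝ) < K (1/4) := hpos _ (by norm_num)
    nlinarith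
  have hdbl6 : ∀ t ∈ Set.Ioc (0:ℝ) 1, K t ≤ C ^ 6 * K (t / 64) := by
    intro t ht
    obtain ⟨ht0, ht1⟩ := ht
    have step : ∀ u : ℝ, 0 < u → u ≤ 1 → K u ≤ C * K (u / 2) := by
      intro u hu0 hu1
      have h := hdouble (u/2) ⟨by linarith, by linarith⟩
      have e : 2 * (u/2) = u := by ring
      rwa [e] at h
    have h1 : K t ≤ C * K (t/2) := step t ht0 ht1
    have h2 : K (t/2) ≤ C * K (t/4) := by
      have h := step (t/2) (by linarith) (by linarith); have e : t/2/2 = t/4 := by ring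
      rwa [e] at h
    have h3 : K (t/4) ≤ C * K (t/8) := by
      have h := step (t/4) (by linarith) (by linarith); have e : t/4/2 = t/8 := by ring
      rwa [e] at h
    have h4 : K (t/8) ≤ C * K (t/16) := by
      have h := step (t/8) (by linarith) (by linarith); have e : t/8/2 = t/16 := by ring
      rwa [e] at h
    have h5 : K (t/16) ≤ C * K (t/32) := by
      have h := step (t/16) (by linarith) (by linarith); have e : t/16/2 = t/32 := by ring
      rwa [e] at h
    have h6 : K (t/32) ≤ C * K (t/64) := by
      have h := step (t/32) (by linarith) (by linarith); have e : t/32/2 = t/64 := by ring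
      rwa [e] at h
    nlinarith [hpos (t/2) (by linarith), hpos (t/4) (by linarith), hpos (t/8) (by linarith),
      hpos (t/16) (by linarith), hpos (t/32) (by linarith), hpos (t/64) (by linarith),
      pow_pos hC 2, pow_pos hC 3, pow_pos hC 4, pow_pos hC 5]
  have hMs : (0:ℝ) < max ((3/16 : ℝ) ^ s) ((4:ℝ) ^ s) :=
    lt_of_lt_of_le (Real.rpow_pos_of_pos (by norm_num) s) (le_max_left _ _)
  have hMr : (0:ℝ) < max ((1/2 : ℝ) ^ r) ((2:ℝ) ^ r) :=
    lt_of_lt_of_le (Real.rpow_pos_of_pos (by norm_num) r) (le_max_left _ _)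
  refine ⟨3 / (16 * C ^ 6 * max ((3/16 : ℝ) ^ s) ((4:ℝ) ^ s) * max ((1/2 : ℝ) ^ r) ((2:ℝ) ^ r)),
    div_pos (by norm_num) (mul_pos (mul_pos (mul_pos (by norm_num) (pow_pos hC 6)) hMs) hMr), ?_⟩
  intro a z ha hz
  have hY : (0:ℝ) < 1 - ‖z‖ ^ 2 := by nlinarith [norm_nonneg z]
  have ht0 : 0 < 1 - ‖(a - z) / (1 - (starRingEnd ℂ) a * z)‖ ^ 2 := one_sub_sq_pos a z ha hz
  have ht1 : 1 - ‖(a - z) / (1 - (starRingEnd ℂ) a * z)‖ ^ 2 ≤ 1 := by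
    nlinarith [sq_nonneg ‖(a - z) / (1 - (starRingEnd ℂ) a * z)‖]
  set T : ℝ := 1 - ‖(a - z) / (1 - (starRingEnd ℂ) a * z)‖ ^ 2 with hT_def
  have hKT : 0 < K T := hpos T ht0
  have hK64 : K T / C ^ 6 ≤ K (T / 64) := by
    rw [div_le_iff₀ (pow_pos hC 6)]
    have := hdbl6 T ⟨ht0, ht1⟩
    linarith
  -- the set E
  set E : Set ℂ := {w : ℂ | ‖w‖ < 1 ∧ ‖(z - w) / (1 - (starRingEnd ℂ) z * w)‖ < 1 / 2} with hE_def
  have hEmeas : MeasurableSet E := by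
    rw [hE_def]
    have h1 : Measurable fun w : ℂ => ‖w‖ := by fun_prop
    have h2 : Measurable fun w : ℂ => ‖(z - w) / (1 - (starRingEnd ℂ) z * w)‖ := by fun_prop
    exact (measurableSet_lt h1 measurable_const).inter (measurableSet_lt h2 measurable_const)
  have hEsub : E ⊆ Metric.ball (0:ℂ) 1 := by
    intro w hw
    rw [Metric.mem_ball, dist_zero_right]
    exact hw.1
  have hEfin : volume E ≠ ⊤ := by
    refine ne_top_of_le_ne_top ?_ (measure_mono hEsub)
    rw [Complex.volume_ball]
    exact ENNReal.mul_ne_top (by simp) ENNReal.coe_ne_top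
  -- lower volume bound via inscribed Euclidean ball
  have hball : Metric.ball z ((1 - ‖z‖ ^ 2)/4) ⊆ E := by
    intro w hw
    rw [Metric.mem_ball, dist_eq_norm] at hw
    have hzw : ‖z - w‖ < (1 - ‖z‖ ^ 2)/4 := by rw [norm_sub_rev]; exact hw
    have hw1 : ‖w‖ < 1 := by
      have : ‖w‖ ≤ ‖z‖ + ‖w - z‖ := by
        calc ‖w‖ = ‖z + (w - z)‖ := by ring_nf
        _ ≤ ‖z‖ + ‖w - z‖ := norm_add_le _ _
      nlinarith [norm_nonneg z]
    refine ⟨hw1, ?_⟩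
    have hone_zz : ‖(1:ℂ) - (starRingEnd ℂ) z * z‖ = 1 - ‖z‖ ^ 2 := by
      have e1 : (starRingEnd ℂ) z * z = (Complex.normSq z : ℂ) := by rw [mul_comm, Complex.mul_conj]
      have e2 : Complex.normSq z = ‖z‖ ^ 2 := by rw [← Complex.sq_norm]
      have e3 : ((1:ℂ) - ((‖z‖ ^ 2 : ℝ) : ℂ)) = (((1 - ‖z‖ ^ 2 : ℝ)) : ℂ) := by push_cast; ring
      rw [e1, e2, e3, Complex.norm_real, Real.norm_eq_abs, _root_.abs_of_nonneg hY.le]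
    have hlow : (3/4) * (1 - ‖z‖ ^ 2) ≤ ‖(1:ℂ) - (starRingEnd ℂ) z * w‖ := by
      have e : (1 : ℂ) - (starRingEnd ℂ) z * w
          = (1 - (starRingEnd ℂ) z * z) - (starRingEnd ℂ) z * (w - z) := by ring
      have h1 : ‖(1:ℂ) - (starRingEnd ℂ) z * z‖ - ‖(starRingEnd ℂ) z * (w - z)‖
          ≤ ‖(1:ℂ) - (starRingEnd ℂ) z * w‖ := by
        rw [e]; exact norm_sub_norm_le _ _
      have h2 : ‖(starRingEnd ℂ) z * (w - z)‖ ≤ ‖w - z‖ := by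
        rw [norm_mul, RCLike.norm_conj]
        nlinarith [norm_nonneg (w - z), norm_nonneg z]
      rw [hone_zz] at h1
      rw [norm_sub_rev] at hzw
      linarith
    rw [norm_div, div_lt_iff₀ (den_pos z w hz hw1)]
    linarith
  have hvol : (3/16) * (1 - ‖z‖ ^ 2) ^ 2 ≤ (volume E).toReal := by
    have h1 : volume (Metric.ball z ((1 - ‖z‖ ^ 2)/4)) ≤ volume E := measure_mono hball
    have h2 : (volume (Metric.ball z ((1 - ‖z‖ ^ 2)/4))).toReal
        = ((1 - ‖z‖ ^ 2)/4) ^ 2 * Real.pi := by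
      rw [Complex.volume_ball, ENNReal.toReal_mul, ENNReal.toReal_pow,
        ENNReal.toReal_ofReal (by positivity), ENNReal.coe_toReal, NNReal.coe_real_pi]
    have h3 := ENNReal.toReal_mono hEfin h1
    rw [h2] at h3
    nlinarith [Real.pi_gt_three, sq_nonneg (1 - ‖z‖ ^ 2)]
  -- pointwise lower bound on the integrand
  set m : ℝ := (K T / C ^ 6) /
      ((max ((3/16 : ℝ) ^ s) ((4:ℝ) ^ s) * (1 - ‖z‖ ^ 2) ^ s) *
        (max ((1/2 : ℝ) ^ r) ((2:ℝ) ^ r) * (1 - ‖z‖ ^ 2) ^ r)) with hm_def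
  have hYs : (0:ℝ) < (1 - ‖z‖ ^ 2) ^ s := Real.rpow_pos_of_pos hY s
  have hYr : (0:ℝ) < (1 - ‖z‖ ^ 2) ^ r := Real.rpow_pos_of_pos hY r
  have hm_pos : 0 < m := by
    rw [hm_def]
    exact div_pos (div_pos hKT (pow_pos hC 6)) (mul_pos (mul_pos hMs hYs) (mul_pos hMr hYr))
  have hpt : ∀ w ∈ E, m ≤ K (1 - ‖(a - w) / (1 - (starRingEnd ℂ) a * w)‖ ^ 2) /
      ((1 - ‖w‖ ^ 2) ^ s * ‖1 - (starRingEnd ℂ) w * z‖ ^ r) := by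
    intro w hw
    obtain ⟨hw1, hw2⟩ := hw
    obtain ⟨k1, k2, k3, k4, k5⟩ := keyfacts a z w ha hz hw1 hw2
    have hNpos := one_sub_sq_pos a w ha hw1
    have hW : (0:ℝ) < 1 - ‖w‖ ^ 2 := by nlinarith [norm_nonneg w]
    have hdwz : (0:ℝ) < ‖(1:ℂ) - (starRingEnd ℂ) w * z‖ := by
      rw [conj_den_norm]; exact den_pos z w hz hw1
    have hDpos : 0 < (1 - ‖w‖ ^ 2) ^ s * ‖(1:ℂ) - (starRingEnd ℂ) w * z‖ ^ r :=
      mul_pos (Real.rpow_pos_of_pos hW s) (Real.rpow_pos_of_pos hdwz r)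
    have hKnum : K T / C ^ 6 ≤ K (1 - ‖(a - w) / (1 - (starRingEnd ℂ) a * w)‖ ^ 2) := by
      refine le_trans hK64 (hmono ?_)
      have : T / 64 ≤ T / 48 := by
        rw [div_le_div_iff₀ (by norm_num) (by norm_num)]; nlinarith [ht0]
      linarith [k5]
    have hDub : (1 - ‖w‖ ^ 2) ^ s * ‖(1:ℂ) - (starRingEnd ℂ) w * z‖ ^ r
        ≤ (max ((3/16 : ℝ) ^ s) ((4:ℝ) ^ s) * (1 - ‖z‖ ^ 2) ^ s) *
          (max ((1/2 : ℝ) ^ r) ((2:ℝ) ^ r) * (1 - ‖z‖ ^ 2) ^ r) := by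
      refine mul_le_mul (rpow_ub s hY (by norm_num) k1 k2) (rpow_ub r hY (by norm_num) k3 k4)
        (Real.rpow_nonneg hdwz.le r) (mul_pos hMs hYs).le
    calc m ≤ (K T / C ^ 6) /
        ((1 - ‖w‖ ^ 2) ^ s * ‖(1:ℂ) - (starRingEnd ℂ) w * z‖ ^ r) := by
          rw [hm_def]
          exact div_le_div_of_nonneg_left (div_pos hKT (pow_pos hC 6)).le hDpos hDub
    _ ≤ K (1 - ‖(a - w) / (1 - (starRingEnd ℂ) a * w)‖ ^ 2) /
        ((1 - ‖w‖ ^ 2) ^ s * ‖(1:ℂ) - (starRingEnd ℂ) w * z‖ ^ r) := by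
          exact (div_le_div_iff_of_pos_right hDpos).mpr hKnum
  -- integrability
  have hmeas_f : Measurable (fun w : ℂ => K (1 - ‖(a - w) / (1 - (starRingEnd ℂ) a * w)‖ ^ 2) /
      ((1 - ‖w‖ ^ 2) ^ s * ‖1 - (starRingEnd ℂ) w * z‖ ^ r)) := by
    have h1 : Measurable fun w : ℂ => 1 - ‖(a - w) / (1 - (starRingEnd ℂ) a * w)‖ ^ 2 := by
      fun_prop
    have h2 : Measurable fun w : ℂ =>
        (1 - ‖w‖ ^ 2) ^ s * ‖1 - (starRingEnd ℂ) w * z‖ ^ r := by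
      have hconjm : Measurable fun w : ℂ => (starRingEnd ℂ) w := continuous_star.measurable
      fun_prop
    exact (hmono.measurable.comp h1).div h2
  have hmin_s : (0:ℝ) < min ((3/16 : ℝ) ^ s) ((4:ℝ) ^ s) :=
    lt_min (Real.rpow_pos_of_pos (by norm_num) s) (Real.rpow_pos_of_pos (by norm_num) s)
  have hmin_r : (0:ℝ) < min ((1/2 : ℝ) ^ r) ((2:ℝ) ^ r) :=
    lt_min (Real.rpow_pos_of_pos (by norm_num) r) (Real.rpow_pos_of_pos (by norm_num) r)
  have hbdd : ∀ᵐ w ∂(volume.restrict E),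
      ‖K (1 - ‖(a - w) / (1 - (starRingEnd ℂ) a * w)‖ ^ 2) /
        ((1 - ‖w‖ ^ 2) ^ s * ‖1 - (starRingEnd ℂ) w * z‖ ^ r)‖
      ≤ K 1 / ((min ((3/16 : ℝ) ^ s) ((4:ℝ) ^ s) * (1 - ‖z‖ ^ 2) ^ s) *
          (min ((1/2 : ℝ) ^ r) ((2:ℝ) ^ r) * (1 - ‖z‖ ^ 2) ^ r)) := by
    rw [ae_restrict_iff' hEmeas]
    refine ae_of_all _ fun w hw => ?_
    obtain ⟨hw1, hw2⟩ := hw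
    obtain ⟨k1, k2, k3, k4, k5⟩ := keyfacts a z w ha hz hw1 hw2
    have hNpos := one_sub_sq_pos a w ha hw1
    have hN1 : 1 - ‖(a - w) / (1 - (starRingEnd ℂ) a * w)‖ ^ 2 ≤ 1 := by
      nlinarith [sq_nonneg ‖(a - w) / (1 - (starRingEnd ℂ) a * w)‖]
    have hW : (0:ℝ) < 1 - ‖w‖ ^ 2 := by nlinarith [norm_nonneg w]
    have hdwz : (0:ℝ) < ‖(1:ℂ) - (starRingEnd ℂ) w * z‖ := by
      rw [conj_den_norm]; exact den_pos z w hz hw1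
    have hDpos : 0 < (1 - ‖w‖ ^ 2) ^ s * ‖(1:ℂ) - (starRingEnd ℂ) w * z‖ ^ r :=
      mul_pos (Real.rpow_pos_of_pos hW s) (Real.rpow_pos_of_pos hdwz r)
    have hDlb : (min ((3/16 : ℝ) ^ s) ((4:ℝ) ^ s) * (1 - ‖z‖ ^ 2) ^ s) *
          (min ((1/2 : ℝ) ^ r) ((2:ℝ) ^ r) * (1 - ‖z‖ ^ 2) ^ r)
        ≤ (1 - ‖w‖ ^ 2) ^ s * ‖(1:ℂ) - (starRingEnd ℂ) w * z‖ ^ r := by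
      refine mul_le_mul (rpow_lb s hY (by norm_num) k1 k2) (rpow_lb r hY (by norm_num) k3 k4)
        (mul_pos hmin_r hYr).le (Real.rpow_nonneg hW.le s)
    rw [Real.norm_eq_abs, _root_.abs_of_nonneg (div_nonneg (hpos _ hNpos).le hDpos.le)]
    exact div_le_div₀ (hpos 1 one_pos).le (hmono hN1) (mul_pos (mul_pos hmin_s hYs) (mul_pos hmin_r hYr)) hDlb
  have hintOn : IntegrableOn
      (fun w : ℂ => K (1 - ‖(a - w) / (1 - (starRingEnd ℂ) a * w)‖ ^ 2) /
        ((1 - ‖w‖ ^ 2) ^ s * ‖1 - (starRingEnd ℂ) w * z‖ ^ r)) E volume :=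
    Measure.integrableOn_of_bounded hEfin hmeas_f.aestronglyMeasurable hbdd
  have hfin := setIntegral_ge_of_const_le hEmeas hEfin hpt hintOn
  -- rpow algebra
  have hp : (1 - ‖z‖ ^ 2) ^ (s + r - 2)
      = (1 - ‖z‖ ^ 2) ^ s * (1 - ‖z‖ ^ 2) ^ r / (1 - ‖z‖ ^ 2) ^ (2:ℕ) := by
    rw [show s + r - 2 = s + r + (-2 : ℝ) by ring, Real.rpow_add hY, Real.rpow_add hY,
      Real.rpow_neg hY.le, show ((2:ℝ)) = ((2:ℕ):ℝ) by norm_num, Real.rpow_natCast]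
    ring
  have heq : 3 / (16 * C ^ 6 * max ((3/16 : ℝ) ^ s) ((4:ℝ) ^ s) * max ((1/2 : ℝ) ^ r) ((2:ℝ) ^ r))
        * K T / (1 - ‖z‖ ^ 2) ^ (s + r - 2)
      = m * ((3/16) * (1 - ‖z‖ ^ 2) ^ 2) := by
    rw [hp, hm_def]
    field_simp
  have h5 : m * ((3/16) * (1 - ‖z‖ ^ 2) ^ 2) ≤ m * (volume E).toReal :=
    mul_le_mul_of_nonneg_left hvol hm_pos.le
  rw [heq]
  exact le_trans (le_of_le_of_eq h5 (by rw [smul_eq_mul, mul_comm, measureReal_def])) hfin
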